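/- Let n ≥ 1, let A ∈ ℝ^{n×n} be symmetric and invertible, let s > n/2 and α ∈ (0,1). Then there is a constant C > 0, depending only on n, A, s, α, such that for every σ ∈ ℝ with |σ| ≥ 1 and every measurable g : ℝⁿ → ℂ with ∫_{ℝⁿ} (1+|ξ|²)^{s+2α} |g(ξ)|² dξ < ∞, one has | ∫_{ℝⁿ} ( e^{−i⟨ξ,A^{−1}ξ⟩/(4σ)} − 1 ) g(ξ) dξ | ≤ C |σ|^{−α} ( ∫_{ℝⁿ} (1+|ξ|²)^{s+2α} |g(ξ)|² dξ )^{1/2}; in particular the integrand on the left is integrable. -/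

import Mathlib

set_option maxHeartbeats 1000000


open MeasureTheory

/-- The quadratic form `ξ ↦ ⟨ξ, Aξ⟩` on `ℝⁿ`. -/
noncomputable def quadForm {n : ℕ} (A : Matrix (Fin n) (Fin n) ℝ)
    (ξ : EuclideanSpace ℝ (Fin n)) : ℝ :=
  ∑ i, ξ i * ∑ j, A i j * ξ j

private lemma coord_abs_le {n : ℕ} (ξ : EuclideanSpace ℝ (Fin n)) (i : Fin n) : |ξ i| ≤ ‖ξ‖ := by
  rw [EuclideanSpace.norm_eq, ← Real.sqrt_sq_eq_abs]
  apply Real.sqrt_le_sqrt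
  have h : (ξ i) ^ 2 = ‖ξ i‖ ^ 2 := by simp [Real.norm_eq_abs, sq_abs]
  rw [h]
  exact Finset.single_le_sum (f := fun j => ‖ξ j‖ ^ 2) (fun j _ => sq_nonneg _) (Finset.mem_univ i)

private lemma quadForm_abs_le {n : ℕ} (B : Matrix (Fin n) (Fin n) ℝ)
    (ξ : EuclideanSpace ℝ (Fin n)) :
    |quadForm B ξ| ≤ (∑ i, ∑ j, |B i j|) * ‖ξ‖ ^ 2 := by
  unfold quadForm
  calc |∑ i, ξ i * ∑ j, B i j * ξ j| ≤ ∑ i, |ξ i * ∑ j, B i j * ξ j| :=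
        Finset.abs_sum_le_sum_abs _ _
  _ ≤ ∑ i, ∑ j, |B i j| * ‖ξ‖ ^ 2 := by
      apply Finset.sum_le_sum; intro i _
      rw [abs_mul]
      have h1 : |∑ j, B i j * ξ j| ≤ ∑ j, |B i j| * ‖ξ‖ :=
        (Finset.abs_sum_le_sum_abs _ _).trans <| Finset.sum_le_sum fun j _ => by
          rw [abs_mul]; exact mul_le_mul_of_nonneg_left (coord_abs_le ξ j) (abs_nonneg _)
      calc |ξ i| * |∑ j, B i j * ξ j| ≤ ‖ξ‖ * ∑ j, |B i j| * ‖ξ‖ :=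
            mul_le_mul (coord_abs_le ξ i) h1 (abs_nonneg _) (norm_nonneg _)
      _ = ∑ j, |B i j| * ‖ξ‖ ^ 2 := by
          rw [Finset.mul_sum]; apply Finset.sum_congr rfl; intro j _; ring
  _ = (∑ i, ∑ j, |B i j|) * ‖ξ‖ ^ 2 := by
      rw [Finset.sum_mul]; apply Finset.sum_congr rfl; intro i _; rw [Finset.sum_mul]

private lemma exp_I_sub_one_norm (t : ℝ) :
    ‖Complex.exp ((t : ℂ) * Complex.I) - 1‖ ≤ 2 * min 1 |t| := by
  rcases le_total |t| 1 with h | h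
  · rw [min_eq_right h]
    have := Complex.norm_exp_sub_one_le (x := t * Complex.I) (by simpa using h)
    simpa using this
  · rw [min_eq_left h, mul_one]
    calc ‖Complex.exp ((t : ℂ) * Complex.I) - 1‖
        ≤ ‖Complex.exp ((t : ℂ) * Complex.I)‖ + ‖(1 : ℂ)‖ := norm_sub_le _ _
    _ ≤ 2 := by simp [Complex.norm_exp_ofReal_mul_I]; norm_num

private lemma min_one_le_rpow {x a : ℝ} (hx : 0 ≤ x) (h0 : 0 < a) (h1 : a ≤ 1) :
    min 1 x ≤ x ^ a := by
  rcases eq_or_lt_of_le hx with h | hxpos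
  · simp [← h, Real.zero_rpow h0.ne']
  rcases le_total x 1 with h | h
  · rw [min_eq_right h]
    calc x = x ^ (1 : ℝ) := (Real.rpow_one x).symm
    _ ≤ x ^ a := Real.rpow_le_rpow_of_exponent_ge hxpos h h1
  · rw [min_eq_left h]
    calc (1 : ℝ) = x ^ (0 : ℝ) := (Real.rpow_zero x).symm
    _ ≤ x ^ a := Real.rpow_le_rpow_of_exponent_le h h0.le

theorem stmt7 (n : ℕ) (hn : 1 ≤ n) (A : Matrix (Fin n) (Fin n) ℝ) (hA : A.IsSymm)
    (hdet : IsUnit A.det) (s α : ℝ) (hs : (n : ℝ) / 2 < s) (hα : α ∈ Set.Ioo (0:ℝ) 1) :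
    ∃ C > 0, ∀ σ : ℝ, 1 ≤ |σ| → ∀ g : EuclideanSpace ℝ (Fin n) → ℂ, Measurable g →
      Integrable (fun ξ : EuclideanSpace ℝ (Fin n) =>
        (1 + ‖ξ‖ ^ 2) ^ (s + 2 * α) * ‖g ξ‖ ^ 2) →
      Integrable (fun ξ : EuclideanSpace ℝ (Fin n) =>
        (Complex.exp (-(Complex.I * quadForm A⁻¹ ξ / (4 * σ))) - 1) * g ξ) ∧
      ‖∫ ξ, (Complex.exp (-(Complex.I * quadForm A⁻¹ ξ / (4 * σ))) - 1) * g ξ‖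
        ≤ C * |σ| ^ (-α) *
          (∫ ξ : EuclideanSpace ℝ (Fin n), (1 + ‖ξ‖ ^ 2) ^ (s + 2 * α) * ‖g ξ‖ ^ 2) ^ ((1:ℝ)/2) := by
  obtain ⟨hα0, hα1⟩ := hα
  have hα1' : α ≤ 1 := hα1.le
  set B := A⁻¹ with hB
  have hsum0 : (0:ℝ) ≤ ∑ i, ∑ j, |B i j| :=
    Finset.sum_nonneg fun i _ => Finset.sum_nonneg fun j _ => abs_nonneg _
  set Mt : ℝ := max (∑ i, ∑ j, |B i j|) 1 with hMtdef
  have hMt1 : (1:ℝ) ≤ Mt := le_max_right _ _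
  have hMt0 : (0:ℝ) < Mt := lt_of_lt_of_le one_pos hMt1
  set K : ℝ := 2 * Mt ^ α with hKdef
  have hK0 : 0 < K := by positivity
  have hI : Integrable (fun x : EuclideanSpace ℝ (Fin n) => (1 + ‖x‖ ^ 2) ^ (-s)) := by
    have h := integrable_rpow_neg_one_add_norm_sq (E := EuclideanSpace ℝ (Fin n))
      (μ := volume) (r := 2 * s) (by rw [finrank_euclideanSpace_fin]; linarith)
    have he : -(2 * s) / 2 = -s := by ring
    rwa [he] at h
  set I : ℝ := ∫ x : EuclideanSpace ℝ (Fin n), (1 + ‖x‖ ^ 2) ^ (-s) with hIdef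
  have hI0 : 0 ≤ I := integral_nonneg fun x => Real.rpow_nonneg (by positivity) _
  refine ⟨K * (I ^ ((1:ℝ)/2) + 1), by positivity, ?_⟩
  intro σ hσ g hg hgint
  have hσ0 : (0:ℝ) < |σ| := lt_of_lt_of_le one_pos hσ
  have hw : ∀ x : EuclideanSpace ℝ (Fin n), (0:ℝ) < 1 + ‖x‖ ^ 2 := fun x => by positivity
  set u : EuclideanSpace ℝ (Fin n) → ℝ := fun x => (1 + ‖x‖ ^ 2) ^ (-(s/2)) with hu
  set v : EuclideanSpace ℝ (Fin n) → ℝ :=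
    fun x => (1 + ‖x‖ ^ 2) ^ ((s + 2 * α)/2) * ‖g x‖ with hv
  have hbase_cont : Continuous fun x : EuclideanSpace ℝ (Fin n) => 1 + ‖x‖ ^ 2 := by fun_prop
  have hu_cont : Continuous u := by
    apply hbase_cont.rpow_const
    intro x; exact Or.inl (hw x).ne'
  have hw_cont : Continuous
      (fun x : EuclideanSpace ℝ (Fin n) => (1 + ‖x‖ ^ 2) ^ ((s + 2 * α)/2)) := by
    apply hbase_cont.rpow_const
    intro x; exact Or.inl (hw x).ne'
  have hv_meas : AEStronglyMeasurable v volume :=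
    (hw_cont.measurable.mul hg.norm).aestronglyMeasurable
  have hu2 : (fun x => u x ^ 2) =
      fun x : EuclideanSpace ℝ (Fin n) => (1 + ‖x‖ ^ 2) ^ (-s) := by
    funext x
    simp only [hu]
    rw [← Real.rpow_natCast ((1 + ‖x‖ ^ 2) ^ (-(s/2))) 2, ← Real.rpow_mul (hw x).le]
    norm_num
  have hv2 : (fun x => v x ^ 2) =
      fun x : EuclideanSpace ℝ (Fin n) => (1 + ‖x‖ ^ 2) ^ (s + 2 * α) * ‖g x‖ ^ 2 := by
    funext x
    simp only [hv, mul_pow]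
    congr 1
    rw [← Real.rpow_natCast ((1 + ‖x‖ ^ 2) ^ ((s + 2 * α)/2)) 2, ← Real.rpow_mul (hw x).le]
    norm_num
  have huv : ∀ x, u x * v x = (1 + ‖x‖ ^ 2) ^ α * ‖g x‖ := by
    intro x
    simp only [hu, hv, ← mul_assoc]
    rw [← Real.rpow_add (hw x)]
    congr 2
    ring
  have hu2int : Integrable (fun x => u x ^ 2) := by rw [hu2]; exact hI
  have hv2int : Integrable (fun x => v x ^ 2) := by rw [hv2]; exact hgint
  have huL2 : MemLp u 2 volume :=
    (memLp_two_iff_integrable_sq hu_cont.aestronglyMeasurable).2 hu2int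
  have hvL2 : MemLp v 2 volume := (memLp_two_iff_integrable_sq hv_meas).2 hv2int
  have hu_nonneg : ∀ x, 0 ≤ u x := fun x => Real.rpow_nonneg (hw x).le _
  have hv_nonneg : ∀ x, 0 ≤ v x :=
    fun x => mul_nonneg (Real.rpow_nonneg (hw x).le _) (norm_nonneg _)
  have hpq : Real.HolderConjugate 2 2 := Real.holderConjugate_iff.mpr ⟨one_lt_two, by norm_num⟩
  have hCS : ∫ x, u x * v x ≤
      (∫ x, u x ^ 2) ^ ((1:ℝ)/2) * (∫ x, v x ^ 2) ^ ((1:ℝ)/2) := by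
    have h := integral_mul_le_Lp_mul_Lq_of_nonneg hpq
      (Filter.Eventually.of_forall hu_nonneg) (Filter.Eventually.of_forall hv_nonneg)
      (by simpa using huL2) (by simpa using hvL2)
    simpa [Real.rpow_two] using h
  have hφint : Integrable (fun x => u x * v x) := by
    refine Integrable.mono' ((hu2int.add hv2int).div_const 2)
      ((hu_cont.measurable.mul (hw_cont.measurable.mul hg.norm)).aestronglyMeasurable)
      (Filter.Eventually.of_forall fun x => ?_)
    rw [Real.norm_of_nonneg (mul_nonneg (hu_nonneg x) (hv_nonneg x))]
    simp only [Pi.add_apply]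
    nlinarith [sq_nonneg (u x - v x)]
  have key : ∀ ξ : EuclideanSpace ℝ (Fin n),
      ‖Complex.exp (-(Complex.I * quadForm B ξ / (4 * σ))) - 1‖
        ≤ K * |σ| ^ (-α) * (1 + ‖ξ‖ ^ 2) ^ α := by
    intro ξ
    have harg : (-(Complex.I * (quadForm B ξ : ℝ) / (4 * (σ:ℂ))))
        = ((-(quadForm B ξ) / (4 * σ) : ℝ) : ℂ) * Complex.I := by
      push_cast; ring
    rw [harg]
    set t : ℝ := -(quadForm B ξ) / (4 * σ) with ht
    have htb : |t| ≤ Mt * (1 + ‖ξ‖ ^ 2) / |σ| := by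
      have h1 : |quadForm B ξ| ≤ Mt * (1 + ‖ξ‖ ^ 2) := by
        refine (quadForm_abs_le B ξ).trans ?_
        have hle : (∑ i, ∑ j, |B i j|) ≤ Mt := le_max_left _ _
        nlinarith [sq_nonneg ‖ξ‖]
      have h4 : |(4:ℝ) * σ| = 4 * |σ| := by rw [abs_mul]; norm_num
      rw [ht, abs_div, abs_neg, h4]
      calc |quadForm B ξ| / (4 * |σ|) ≤ (Mt * (1 + ‖ξ‖ ^ 2)) / (4 * |σ|) := by
            apply div_le_div_of_nonneg_right h1 (by positivity)
      _ ≤ Mt * (1 + ‖ξ‖ ^ 2) / |σ| := by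
            apply div_le_div_of_nonneg_left (by positivity) hσ0
            nlinarith
    calc ‖Complex.exp ((t:ℂ) * Complex.I) - 1‖ ≤ 2 * min 1 |t| := exp_I_sub_one_norm t
    _ ≤ 2 * |t| ^ α :=
        mul_le_mul_of_nonneg_left (min_one_le_rpow (abs_nonneg t) hα0 hα1') (by norm_num)
    _ ≤ 2 * (Mt * (1 + ‖ξ‖ ^ 2) / |σ|) ^ α :=
        mul_le_mul_of_nonneg_left (Real.rpow_le_rpow (abs_nonneg t) htb hα0.le) (by norm_num)
    _ = K * |σ| ^ (-α) * (1 + ‖ξ‖ ^ 2) ^ α := by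
        rw [Real.div_rpow (by positivity) (abs_nonneg σ),
          Real.mul_rpow hMt0.le (hw ξ).le, Real.rpow_neg (abs_nonneg σ), hKdef]
        field_simp
  have hQm : Measurable (fun ξ : EuclideanSpace ℝ (Fin n) => quadForm B ξ) := by
    unfold quadForm; fun_prop
  have hEm : Measurable (fun ξ : EuclideanSpace ℝ (Fin n) =>
      Complex.exp (-(Complex.I * quadForm B ξ / (4 * σ))) - 1) := by
    apply Measurable.sub _ measurable_const
    apply Complex.measurable_exp.comp
    apply Measurable.neg
    apply Measurable.div_const
    exact (Complex.measurable_ofReal.comp hQm).const_mul Complex.I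
  have hFbound : ∀ x : EuclideanSpace ℝ (Fin n),
      ‖(Complex.exp (-(Complex.I * quadForm B x / (4 * σ))) - 1) * g x‖
        ≤ K * |σ| ^ (-α) * (u x * v x) := by
    intro x
    rw [norm_mul, huv x]
    calc ‖Complex.exp (-(Complex.I * quadForm B x / (4 * σ))) - 1‖ * ‖g x‖
        ≤ (K * |σ| ^ (-α) * (1 + ‖x‖ ^ 2) ^ α) * ‖g x‖ :=
          mul_le_mul_of_nonneg_right (key x) (norm_nonneg _)
    _ = K * |σ| ^ (-α) * ((1 + ‖x‖ ^ 2) ^ α * ‖g x‖) := by ring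
  have hF : Integrable (fun x : EuclideanSpace ℝ (Fin n) =>
      (Complex.exp (-(Complex.I * quadForm B x / (4 * σ))) - 1) * g x) := by
    refine Integrable.mono' (hφint.const_mul (K * |σ| ^ (-α)))
      ((hEm.mul hg).aestronglyMeasurable) (Filter.Eventually.of_forall fun x => ?_)
    exact hFbound x
  refine ⟨hF, ?_⟩
  have hJrw : (∫ x : EuclideanSpace ℝ (Fin n), (1 + ‖x‖ ^ 2) ^ (s + 2 * α) * ‖g x‖ ^ 2)
      = ∫ x, v x ^ 2 := by rw [hv2]
  rw [hJrw]
  have hJ0 : 0 ≤ ∫ x, v x ^ 2 := integral_nonneg fun x => sq_nonneg _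
  have hIu : (∫ x, u x ^ 2) = I := by rw [hu2]
  have hσα : 0 ≤ |σ| ^ (-α) := Real.rpow_nonneg (abs_nonneg σ) _
  have hJh : 0 ≤ (∫ x, v x ^ 2) ^ ((1:ℝ)/2) := Real.rpow_nonneg hJ0 _
  calc ‖∫ ξ, (Complex.exp (-(Complex.I * quadForm B ξ / (4 * σ))) - 1) * g ξ‖
      ≤ ∫ ξ, ‖(Complex.exp (-(Complex.I * quadForm B ξ / (4 * σ))) - 1) * g ξ‖ :=
        norm_integral_le_integral_norm _
  _ ≤ ∫ ξ, K * |σ| ^ (-α) * (u ξ * v ξ) :=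
      integral_mono hF.norm (hφint.const_mul _) hFbound
  _ = K * |σ| ^ (-α) * ∫ ξ, u ξ * v ξ := by rw [integral_const_mul]
  _ ≤ K * |σ| ^ (-α) * ((∫ x, u x ^ 2) ^ ((1:ℝ)/2) * (∫ x, v x ^ 2) ^ ((1:ℝ)/2)) :=
      mul_le_mul_of_nonneg_left hCS (by positivity)
  _ ≤ K * (I ^ ((1:ℝ)/2) + 1) * |σ| ^ (-α) * (∫ x, v x ^ 2) ^ ((1:ℝ)/2) := by
      rw [hIu]
      have h1 : I ^ ((1:ℝ)/2) ≤ I ^ ((1:ℝ)/2) + 1 := by linarith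
      calc K * |σ| ^ (-α) * (I ^ ((1:ℝ)/2) * (∫ x, v x ^ 2) ^ ((1:ℝ)/2))
          = (K * |σ| ^ (-α) * (∫ x, v x ^ 2) ^ ((1:ℝ)/2)) * I ^ ((1:ℝ)/2) := by ring
      _ ≤ (K * |σ| ^ (-α) * (∫ x, v x ^ 2) ^ ((1:ℝ)/2)) * (I ^ ((1:ℝ)/2) + 1) :=
          mul_le_mul_of_nonneg_left h1 (by positivity)
      _ = K * (I ^ ((1:ℝ)/2) + 1) * |σ| ^ (-α) * (∫ x, v x ^ 2) ^ ((1:ℝ)/2) := by ring
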